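/- arXiv:1709.00385 — 4 statements merged into one kernel-verified Lean document; each statement's English description precedes it below -/
import Mathlib

section
/- Let V be a real Hilbert space, A : V → V a self-adjoint continuous linear operator with ⟨A x, x⟩ ≥ 0 for all x ∈ V, and τ > 0. Suppose u_n, u_half ∈ V satisfy the Crank–Nicolson half-step relation (2/τ)(u_half − u_n) = −A u_half, and set u_{n+1} = 2·u_half − u_n. Then ‖u_{n+1}‖ ≤ ‖u_n‖. (This is the stability bound underlying the paper's Lemma 1, stating that successive semi-discrete Crank–Nicolson solutions of the heat equation are bounded by the previous time step.) -/
open RealInnerProductSpace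

/-- Stability of the Crank–Nicolson semi-discretization: for a self-adjoint,
positive-semidefinite continuous operator `A`, successive semi-discrete solutions
satisfy `‖u_{n+1}‖ ≤ ‖u_n‖`. -/
theorem crank_nicolson_stability
    {V : Type*} [NormedAddCommGroup V] [InnerProductSpace ℝ V] [CompleteSpace V]
    (A : V →L[ℝ] V)
    (hsa : ∀ x y : V, ⟪A x, y⟫ = ⟪x, A y⟫)
    (hpsd : ∀ x : V, 0 ≤ ⟪A x, x⟫)
    (τ : ℝ) (hτ : 0 < τ) (un uhalf unp1 : V)
    (hstep : (2 / τ) • (uhalf - un) = -(A uhalf))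
    (hnext : unp1 = (2 : ℝ) • uhalf - un) :
    ‖unp1‖ ≤ ‖un‖ := by
  have hτ' : (2 / τ) ≠ 0 := by positivity
  have hd : uhalf - un = (-(τ / 2)) • A uhalf := by
    have := congrArg (fun v => (τ / 2) • v) hstep
    simp only [smul_smul] at this
    rw [div_mul_div_comm] at this
    rw [show τ * 2 / (2 * τ) = 1 by field_simp] at this
    simpa [neg_smul] using this
  have hkey : ⟪unp1, unp1⟫ = ⟪un, un⟫ + 4 * ⟪uhalf - un, uhalf⟫ := by
    rw [hnext]
    simp only [inner_sub_left, inner_sub_right, real_inner_smul_left,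
      real_inner_smul_right, real_inner_comm un uhalf]
    ring
  have hle : ⟪uhalf - un, uhalf⟫ ≤ 0 := by
    rw [hd, real_inner_smul_left]
    have := hpsd uhalf
    nlinarith
  have hsq : ‖unp1‖ ^ 2 ≤ ‖un‖ ^ 2 := by
    rw [← real_inner_self_eq_norm_sq, ← real_inner_self_eq_norm_sq, hkey]
    linarith
  nlinarith [norm_nonneg unp1, norm_nonneg un]
end

section
/- Let V and W be real Hilbert spaces, L : V → W a continuous linear map, and c > 0 a constant such that c‖v‖ ≤ ‖L v‖ for all v ∈ V. Let 𝒱_h be a subspace of V. Suppose: x̂ ∈ V satisfies L x̂ = F (exact solution with data F); x_h ∈ 𝒱_h satisfies ⟨L x_h − F_h, L φ⟩ = 0 for all φ ∈ 𝒱_h (discrete solution with perturbed data F_h); and x̃_h ∈ 𝒱_h satisfies ⟨L x̃_h − F, L φ⟩ = 0 for all φ ∈ 𝒱_h (discrete solution with the exact data F). Then for every v_h ∈ 𝒱_h, ‖x_h − x̂‖ ≤ (1/c)·‖F_h − F‖ + (‖L‖/c)·‖v_h − x̂‖. (This is the abstract form of Lemma 4, bounding the discrete solution's error by a data-perturbation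 term plus a best-approximation term.) -/
open RealInnerProductSpace

/-- Abstract form of Lemma 4: the error of the discrete FOSLS solution with
perturbed data is bounded by a data-perturbation term plus a best-approximation
term. -/
theorem fosls_error_with_perturbed_data
    {V W : Type*} [NormedAddCommGroup V] [InnerProductSpace ℝ V] [CompleteSpace V]
    [NormedAddCommGroup W] [InnerProductSpace ℝ W] [CompleteSpace W]
    (L : V →L[ℝ] W) (c : ℝ) (hc : 0 < c)
    (hcoer : ∀ v : V, c * ‖v‖ ≤ ‖L v‖)
    (𝒱h : Submodule ℝ V) (F Fh : W)
    (xhat : V) (hexact : L xhat = F)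
    (xh : V) (hxh : xh ∈ 𝒱h)
    (hweakh : ∀ φ ∈ 𝒱h, ⟪L xh - Fh, L φ⟫ = 0)
    (xth : V) (hxth : xth ∈ 𝒱h)
    (hweakt : ∀ φ ∈ 𝒱h, ⟪L xth - F, L φ⟫ = 0) :
    ∀ vh ∈ 𝒱h, ‖xh - xhat‖ ≤ (1 / c) * ‖Fh - F‖ + (‖L‖ / c) * ‖vh - xhat‖ := by
  intro vh hvh
  -- Orthogonality for xth : ⟪L (xth - xhat), L φ⟫ = 0 for φ ∈ 𝒱h
  have horth : ∀ φ ∈ 𝒱h, ⟪L (xth - xhat), L φ⟫ = 0 := by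
    intro φ hφ
    have := hweakt φ hφ
    rw [map_sub, hexact]
    exact this
  -- Step 1 : ‖xh - xth‖ ≤ (1/c) * ‖Fh - F‖
  have hmem1 : xh - xth ∈ 𝒱h := 𝒱h.sub_mem hxh hxth
  have key1 : ‖L (xh - xth)‖ ≤ ‖Fh - F‖ := by
    have h1 := hweakh (xh - xth) hmem1
    have h2 := hweakt (xh - xth) hmem1
    have hinner : ⟪L (xh - xth) - (Fh - F), L (xh - xth)⟫ = 0 := by
      have : L (xh - xth) - (Fh - F) = (L xh - Fh) - (L xth - F) := by
        rw [map_sub]; abel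
      rw [this, inner_sub_left, h1, h2, sub_zero]
    have hsq : ‖L (xh - xth)‖ ^ 2 = ⟪Fh - F, L (xh - xth)⟫ := by
      have := sub_eq_zero.mp (by rw [← inner_sub_left]; exact hinner :
        ⟪L (xh - xth), L (xh - xth)⟫ - ⟪Fh - F, L (xh - xth)⟫ = 0)
      rw [← real_inner_self_eq_norm_sq, this]
    have hcs : ⟪Fh - F, L (xh - xth)⟫ ≤ ‖Fh - F‖ * ‖L (xh - xth)‖ :=
      real_inner_le_norm _ _
    by_cases hz : ‖L (xh - xth)‖ = 0
    · rw [hz]; exact norm_nonneg _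
    · have hpos : 0 < ‖L (xh - xth)‖ := lt_of_le_of_ne (norm_nonneg _) (Ne.symm hz)
      have : ‖L (xh - xth)‖ * ‖L (xh - xth)‖ ≤ ‖Fh - F‖ * ‖L (xh - xth)‖ := by
        nlinarith [hsq, hcs]
      exact le_of_mul_le_mul_right this hpos
  have step1 : ‖xh - xth‖ ≤ (1 / c) * ‖Fh - F‖ := by
    have := (hcoer (xh - xth)).trans key1
    rw [div_mul_eq_mul_div, le_div_iff₀ hc]
    linarith
  -- Step 2 : ‖xth - xhat‖ ≤ (‖L‖/c) * ‖vh - xhat‖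
  have key2 : ‖L (xth - xhat)‖ ≤ ‖L‖ * ‖vh - xhat‖ := by
    have hmem2 : xth - vh ∈ 𝒱h := 𝒱h.sub_mem hxth hvh
    have hsq : ‖L (xth - xhat)‖ ^ 2 = ⟪L (xth - xhat), L (vh - xhat)⟫ := by
      have hsplit : L (xth - xhat) = L (xth - vh) + L (vh - xhat) := by
        rw [← map_add]; congr 1; abel
      rw [← real_inner_self_eq_norm_sq]
      nth_rewrite 2 [hsplit]
      rw [inner_add_right, horth (xth - vh) hmem2, zero_add]
    have hcs : ⟪L (xth - xhat), L (vh - xhat)⟫ ≤ ‖L (xth - xhat)‖ * ‖L (vh - xhat)‖ :=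
      real_inner_le_norm _ _
    have hop : ‖L (vh - xhat)‖ ≤ ‖L‖ * ‖vh - xhat‖ := L.le_opNorm _
    by_cases hz : ‖L (xth - xhat)‖ = 0
    · rw [hz]; positivity
    · have hpos : 0 < ‖L (xth - xhat)‖ := lt_of_le_of_ne (norm_nonneg _) (Ne.symm hz)
      have : ‖L (xth - xhat)‖ * ‖L (xth - xhat)‖ ≤ (‖L‖ * ‖vh - xhat‖) * ‖L (xth - xhat)‖ := by
        nlinarith [hsq, hcs, hop]
      exact le_of_mul_le_mul_right this hpos
  have step2 : ‖xth - xhat‖ ≤ (‖L‖ / c) * ‖vh - xhat‖ := by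
    have := (hcoer (xth - xhat)).trans key2
    rw [div_mul_eq_mul_div, le_div_iff₀ hc]
    linarith
  calc ‖xh - xhat‖ ≤ ‖xh - xth‖ + ‖xth - xhat‖ := norm_sub_le_norm_sub_add_norm_sub xh xth xhat
    _ ≤ (1 / c) * ‖Fh - F‖ + (‖L‖ / c) * ‖vh - xhat‖ := add_le_add step1 step2
end

section
/- Let V, W, Z be real Hilbert spaces, B : V → W and C : W → Z continuous linear maps, B* the Hilbert-adjoint of B, and τ > 0. Define the FOSLS operator L_τ : V × W → V × W × Z by L_τ(u, w) = (B* w + (2/τ) u, w − B u, C w). Let 𝒱_h be a subspace of V × W, let u_n^h ∈ V, and suppose (u^h, V^h) ∈ 𝒱_h satisfies the discrete FOSLS equations ⟨L_τ(u^h, V^h) − ((2/τ) u_n^h, 0, 0), L_τ φ⟩ = 0 for all φ ∈ 𝒱_h. Set u_{n+1}^h = 2 u^h − u_n^h and define the discrete energy-law residual E = (‖u_{n+1}^h‖² − ‖u_n^h‖²)/(2τ) + ‖V^h‖². Then for every φ ∈ 𝒱_h, E = ⟨L_τ(u^h, V^h) − ((2/τ) u_n^h, 0, 0), (u^h, V^h,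 0) − L_τ φ⟩. (This is the key residual representation of the discrete energy law established in the proof of Theorem 1.) -/
open RealInnerProductSpace

/-- Residual representation of the discrete energy law for the FOSLS
discretization of the Crank–Nicolson half-step of the heat equation
(key identity in the proof of Theorem 1).  Product spaces carry the
product (ℓ²) Hilbert structure, realized via `WithLp 2`. -/
theorem fosls_energy_law_residual_representation
    {V W Z : Type*} [NormedAddCommGroup V] [InnerProductSpace ℝ V] [CompleteSpace V]
    [NormedAddCommGroup W] [InnerProductSpace ℝ W] [CompleteSpace W]
    [NormedAddCommGroup Z] [InnerProductSpace ℝ Z] [CompleteSpace Z]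
    (B : V →L[ℝ] W) (C : W →L[ℝ] Z) (τ : ℝ) (hτ : 0 < τ)
    (Lτ : WithLp 2 (V × W) →L[ℝ] WithLp 2 (V × WithLp 2 (W × Z)))
    (hLτ : ∀ (u : V) (w : W),
      Lτ ((WithLp.equiv 2 (V × W)).symm (u, w)) =
        (WithLp.equiv 2 (V × WithLp 2 (W × Z))).symm
          (ContinuousLinearMap.adjoint B w + (2 / τ) • u,
            (WithLp.equiv 2 (W × Z)).symm (w - B u, C w)))
    (𝒱h : Submodule ℝ (WithLp 2 (V × W)))
    (unh uh : V) (Vh : W)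
    (hmem : (WithLp.equiv 2 (V × W)).symm (uh, Vh) ∈ 𝒱h)
    (hFOSLS : ∀ φ ∈ 𝒱h,
      ⟪Lτ ((WithLp.equiv 2 (V × W)).symm (uh, Vh)) -
          (WithLp.equiv 2 (V × WithLp 2 (W × Z))).symm
            ((2 / τ) • unh, (WithLp.equiv 2 (W × Z)).symm (0, 0)),
        Lτ φ⟫ = 0)
    (unp1 : V) (hnext : unp1 = (2 : ℝ) • uh - unh)
    (E : ℝ) (hE : E = (‖unp1‖ ^ 2 - ‖unh‖ ^ 2) / (2 * τ) + ‖Vh‖ ^ 2) :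
    ∀ φ ∈ 𝒱h,
      E = ⟪Lτ ((WithLp.equiv 2 (V × W)).symm (uh, Vh)) -
            (WithLp.equiv 2 (V × WithLp 2 (W × Z))).symm
              ((2 / τ) • unh, (WithLp.equiv 2 (W × Z)).symm (0, 0)),
          (WithLp.equiv 2 (V × WithLp 2 (W × Z))).symm
              (uh, (WithLp.equiv 2 (W × Z)).symm (Vh, 0)) - Lτ φ⟫ := by
  intro φ hφ
  rw [inner_sub_right, hFOSLS φ hφ, sub_zero, hLτ]
  have hτ' : τ ≠ 0 := ne_of_gt hτ
  simp only [WithLp.prod_inner_apply, WithLp.equiv_symm_apply, WithLp.ofLp_toLp,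
    inner_sub_left, inner_add_left, real_inner_smul_left,
    ContinuousLinearMap.adjoint_inner_left, inner_zero_right, inner_zero_left,
    real_inner_self_eq_norm_sq] at *
  rw [hE, hnext]
  have hexp : ‖(2:ℝ) • uh - unh‖ ^ 2 = 4 * ‖uh‖^2 - 4 * ⟪uh, unh⟫ + ‖unh‖^2 := by
    rw [@norm_sub_sq_real, norm_smul, real_inner_smul_left]
    simp [mul_pow]; ring
  rw [hexp]
  rw [real_inner_comm unh uh]
  rw [real_inner_comm Vh (B uh)]
  field_simp
  ring
end

section
/- Let V, W, Z be real Hilbert spaces, B : V → W and C : W → Z continuous linear maps, B* the Hilbert-adjoint of B, τ > 0, and L_τ : V × W → V × W × Z the continuous linear map L_τ(u, w) = (B* w + (2/τ) u, w − B u, C w). Let 𝒱_h be a subspace of V × W. Suppose: u_n^h, u_n ∈ V; (u^h, V^h) ∈ 𝒱_h satisfies ⟨L_τ(u^h, V^h) − ((2/τ) u_n^h, 0, 0), L_τ φ⟩ = 0 for all φ ∈ 𝒱_h; and (u_half, V_half) ∈ V × W satisfies L_τ(u_half, V_half) = ((2/τ) u_n, 0, 0) exactly. Set u_{n+1}^h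 = 2 u^h − u_n^h and E = (‖u_{n+1}^h‖² − ‖u_n^h‖²)/(2τ) + ‖V^h‖². Then for every φ ∈ 𝒱_h, |E| ≤ ( ‖L_τ‖ · ‖(u^h, V^h) − (u_half, V_half)‖ + (2/τ)·‖u_n^h − u_n‖ ) · ‖(u^h, V^h, 0) − L_τ φ‖, where ‖L_τ‖ is the operator norm. Consequently the same bound holds with the last factor replaced by the infimum of ‖(u^h, V^h, 0) − L_τ φ‖ over φ ∈ 𝒱_h. (This is the abstract form of Theorem 1, bounding the deviation of the FOSLS discretization from the exact discrete energy law.) -/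
open RealInnerProductSpace

/-- Abstract form of Theorem 1: the deviation of the FOSLS discretization from
the exact discrete energy law is bounded by the product of a consistency factor
and the distance of `(u^h, V^h, 0)` to the range of `L_τ` over the
finite-element space.  Product spaces carry the product (ℓ²) Hilbert
structure, realized via `WithLp 2`. -/
theorem fosls_energy_law_bound
    {V W Z : Type*} [NormedAddCommGroup V] [InnerProductSpace ℝ V] [CompleteSpace V]
    [NormedAddCommGroup W] [InnerProductSpace ℝ W] [CompleteSpace W]
    [NormedAddCommGroup Z] [InnerProductSpace ℝ Z] [CompleteSpace Z]
    (B : V →L[ℝ] W) (C : W →L[ℝ] Z) (τ : ℝ) (hτ : 0 < τ)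
    (Lτ : WithLp 2 (V × W) →L[ℝ] WithLp 2 (V × WithLp 2 (W × Z)))
    (hLτ : ∀ (u : V) (w : W),
      Lτ ((WithLp.equiv 2 (V × W)).symm (u, w)) =
        (WithLp.equiv 2 (V × WithLp 2 (W × Z))).symm
          (ContinuousLinearMap.adjoint B w + (2 / τ) • u,
            (WithLp.equiv 2 (W × Z)).symm (w - B u, C w)))
    (𝒱h : Submodule ℝ (WithLp 2 (V × W)))
    (unh un uh : V) (Vh : W)
    (hmem : (WithLp.equiv 2 (V × W)).symm (uh, Vh) ∈ 𝒱h)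
    (hFOSLS : ∀ φ ∈ 𝒱h,
      ⟪Lτ ((WithLp.equiv 2 (V × W)).symm (uh, Vh)) -
          (WithLp.equiv 2 (V × WithLp 2 (W × Z))).symm
            ((2 / τ) • unh, (WithLp.equiv 2 (W × Z)).symm (0, 0)),
        Lτ φ⟫ = 0)
    (uhalf : V) (Vhalf : W)
    (hexact : Lτ ((WithLp.equiv 2 (V × W)).symm (uhalf, Vhalf)) =
        (WithLp.equiv 2 (V × WithLp 2 (W × Z))).symm
          ((2 / τ) • un, (WithLp.equiv 2 (W × Z)).symm (0, 0)))
    (unp1 : V) (hnext : unp1 = (2 : ℝ) • uh - unh)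
    (E : ℝ) (hE : E = (‖unp1‖ ^ 2 - ‖unh‖ ^ 2) / (2 * τ) + ‖Vh‖ ^ 2) :
    (∀ φ ∈ 𝒱h,
      |E| ≤ (‖Lτ‖ * ‖(WithLp.equiv 2 (V × W)).symm (uh, Vh) -
                      (WithLp.equiv 2 (V × W)).symm (uhalf, Vhalf)‖ +
              (2 / τ) * ‖unh - un‖) *
            ‖(WithLp.equiv 2 (V × WithLp 2 (W × Z))).symm
                (uh, (WithLp.equiv 2 (W × Z)).symm (Vh, 0)) - Lτ φ‖) ∧
    |E| ≤ (‖Lτ‖ * ‖(WithLp.equiv 2 (V × W)).symm (uh, Vh) -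
                    (WithLp.equiv 2 (V × W)).symm (uhalf, Vhalf)‖ +
            (2 / τ) * ‖unh - un‖) *
          ⨅ φ : 𝒱h,
            ‖(WithLp.equiv 2 (V × WithLp 2 (W × Z))).symm
                (uh, (WithLp.equiv 2 (W × Z)).symm (Vh, 0)) - Lτ (φ : WithLp 2 (V × W))‖ := by
  have hτ' : τ ≠ 0 := ne_of_gt hτ
  set X : WithLp 2 (V × W) := (WithLp.equiv 2 (V × W)).symm (uh, Vh) with hX
  set Xh : WithLp 2 (V × W) := (WithLp.equiv 2 (V × W)).symm (uhalf, Vhalf) with hXh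
  set rhs : WithLp 2 (V × WithLp 2 (W × Z)) :=
    (WithLp.equiv 2 (V × WithLp 2 (W × Z))).symm
      ((2 / τ) • unh, (WithLp.equiv 2 (W × Z)).symm (0, 0)) with hrhs
  set y : WithLp 2 (V × WithLp 2 (W × Z)) :=
    (WithLp.equiv 2 (V × WithLp 2 (W × Z))).symm
      (uh, (WithLp.equiv 2 (W × Z)).symm (Vh, 0)) with hy
  set g : WithLp 2 (V × WithLp 2 (W × Z)) := Lτ X - rhs with hg
  set c : ℝ := ‖Lτ‖ * ‖X - Xh‖ + (2 / τ) * ‖unh - un‖ with hc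
  -- E equals ⟪g, y⟫
  have hgy : E = ⟪g, y⟫ := by
    rw [hg, hrhs, hX, hLτ, hE, hnext, hy]
    simp only [WithLp.equiv_symm_apply, ← WithLp.toLp_sub, Prod.mk_sub_mk, sub_zero]
    simp [WithLp.prod_inner_apply, inner_sub_left, inner_add_left, real_inner_smul_left,
      ContinuousLinearMap.adjoint_inner_left, real_inner_self_eq_norm_sq,
      real_inner_comm (B uh) Vh, norm_sub_sq_real, norm_smul, real_inner_smul_left,
      mul_pow]
    field_simp
    rw [real_inner_comm uh unh]
    ring
  -- bound on ‖g‖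
  have hgle : ‖g‖ ≤ c := by
    have key : rhs + (WithLp.equiv 2 (V × WithLp 2 (W × Z))).symm ((2 / τ) • (un - unh), 0)
        = (WithLp.equiv 2 (V × WithLp 2 (W × Z))).symm
            ((2 / τ) • un, (WithLp.equiv 2 (W × Z)).symm (0, 0)) := by
      rw [hrhs]
      simp only [WithLp.equiv_symm_apply]
      rw [← WithLp.toLp_add]
      congr 1
      rw [Prod.mk_add_mk, add_zero, smul_sub]
      congr 1
      abel
    have hdecomp : g = Lτ (X - Xh) +
        (WithLp.equiv 2 (V × WithLp 2 (W × Z))).symm ((2 / τ) • (un - unh), 0) := by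
      rw [hg, map_sub, hexact, ← key]
      abel
    rw [hdecomp]
    refine (norm_add_le _ _).trans ?_
    rw [hc]
    have h1 : ‖Lτ (X - Xh)‖ ≤ ‖Lτ‖ * ‖X - Xh‖ := Lτ.le_opNorm _
    have h2 : ‖(WithLp.equiv 2 (V × WithLp 2 (W × Z))).symm ((2 / τ) • (un - unh), 0)‖
        = (2 / τ) * ‖unh - un‖ := by
      rw [WithLp.equiv_symm_apply, WithLp.norm_toLp_fst, norm_smul, norm_sub_rev]
      congr 1
      exact abs_of_pos (by positivity)
    rw [h2]
    exact add_le_add h1 le_rfl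
  -- pointwise bound
  have hpt : ∀ φ ∈ 𝒱h, |E| ≤ c * ‖y - Lτ φ‖ := by
    intro φ hφ
    have hEeq : E = ⟪g, y - Lτ φ⟫ := by
      rw [inner_sub_right, hFOSLS φ hφ, sub_zero, hgy]
    calc |E| = |⟪g, y - Lτ φ⟫| := by rw [hEeq]
      _ ≤ ‖g‖ * ‖y - Lτ φ‖ := abs_real_inner_le_norm _ _
      _ ≤ c * ‖y - Lτ φ‖ := mul_le_mul_of_nonneg_right hgle (norm_nonneg _)
  refine ⟨hpt, ?_⟩
  have hc0 : 0 ≤ c := by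
    rw [hc]; positivity
  have hne : Nonempty 𝒱h := ⟨⟨0, 𝒱h.zero_mem⟩⟩
  rcases eq_or_lt_of_le hc0 with hceq | hcpos
  · have := hpt X hmem
    rw [← hceq] at this ⊢
    simpa using this
  · rw [mul_comm, ← div_le_iff₀ hcpos]
    apply le_ciInf
    intro φ
    rw [div_le_iff₀ hcpos, mul_comm]
    exact hpt φ φ.2
end
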